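/- Let a₁₂, a₁₃, a₁₄, a₂₃, a₂₄, a₃₄ be nonnegative real numbers and let f = a₁₂x₁x₂ + a₁₃x₁x₃ + a₁₄x₁x₄ + a₂₃x₂x₃ + a₂₄x₂x₄ + a₃₄x₃x₄ ∈ ℂ[x₁,x₂,x₃,x₄]. Then f is stable if and only if a₁₂²a₃₄² + a₁₃²a₂₄² + a₁₄²a₂₃² − 2a₁₂a₃₄a₁₃a₂₄ − 2a₁₃a₂₄a₁₄a₂₃ − 2a₁₂a₃₄a₁₄a₂₃ ≤ 0. -/

import Mathlib

open MvPolynomial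

noncomputable section

set_option maxHeartbeats 1000000

/-- All principal minors nonneg ⇒ 3×3 symmetric quadratic form is PSD. -/
private lemma psd3 (g11 g12 g13 g22 g23 g33 : ℝ) (h1 : 0 ≤ g11) (h2 : 0 ≤ g22) (h3 : 0 ≤ g33)
    (h12 : g12 ^ 2 ≤ g11 * g22) (h13 : g13 ^ 2 ≤ g11 * g33) (h23 : g23 ^ 2 ≤ g22 * g33)
    (hdet : 0 ≤ g11 * g22 * g33 + 2 * g12 * g13 * g23 - g11 * g23 ^ 2 - g22 * g13 ^ 2
        - g33 * g12 ^ 2) (d1 d2 d3 : ℝ) :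
    0 ≤ g11 * d1 ^ 2 + g22 * d2 ^ 2 + g33 * d3 ^ 2 + 2 * g12 * d1 * d2 + 2 * g13 * d1 * d3
        + 2 * g23 * d2 * d3 := by
  rcases eq_or_lt_of_le h1 with hg11 | hg11
  · have hg12 : g12 = 0 := by nlinarith [sq_nonneg g12]
    have hg13 : g13 = 0 := by nlinarith [sq_nonneg g13]
    rcases eq_or_lt_of_le h2 with hg22 | hg22
    · have hg23 : g23 = 0 := by nlinarith [sq_nonneg g23]
      rw [hg12, hg13, hg23, ← hg11, ← hg22]
      nlinarith [sq_nonneg d3]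
    · rw [hg12, hg13, ← hg11]
      nlinarith [sq_nonneg (g22 * d2 + g23 * d3), mul_nonneg (sub_nonneg.2 h23) (sq_nonneg d3),
        hg22]
  · rcases eq_or_lt_of_le (by nlinarith : (0:ℝ) ≤ g11 * g22 - g12 ^ 2) with hm3 | hm3
    · have hC : g11 * g23 - g12 * g13 = 0 := by
        nlinarith [sq_nonneg (g11 * g23 - g12 * g13), mul_nonneg hg11.le hdet]
      have key : g11 * (g11 * d1 ^ 2 + g22 * d2 ^ 2 + g33 * d3 ^ 2 + 2 * g12 * d1 * d2
          + 2 * g13 * d1 * d3 + 2 * g23 * d2 * d3)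
          = (g11 * d1 + g12 * d2 + g13 * d3) ^ 2 + (g11 * g33 - g13 ^ 2) * d3 ^ 2
            + (g11 * g22 - g12 ^ 2) * d2 ^ 2 + 2 * (g11 * g23 - g12 * g13) * (d2 * d3) := by
        ring
      rw [← hm3, hC] at key
      nlinarith [key, sq_nonneg (g11 * d1 + g12 * d2 + g13 * d3),
        mul_nonneg (sub_nonneg.2 h13) (sq_nonneg d3), hg11]
    · have hkey : g11 * (g11 * g22 - g12 ^ 2) * (g11 * d1 ^ 2 + g22 * d2 ^ 2 + g33 * d3 ^ 2
          + 2 * g12 * d1 * d2 + 2 * g13 * d1 * d3 + 2 * g23 * d2 * d3)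
          = (g11 * g22 - g12 ^ 2) * (g11 * d1 + g12 * d2 + g13 * d3) ^ 2
            + ((g11 * g22 - g12 ^ 2) * d2 + (g11 * g23 - g12 * g13) * d3) ^ 2
            + g11 * (g11 * g22 * g33 + 2 * g12 * g13 * g23 - g11 * g23 ^ 2 - g22 * g13 ^ 2
              - g33 * g12 ^ 2) * d3 ^ 2 := by ring
      nlinarith [hkey, mul_pos hg11 hm3,
        mul_nonneg hm3.le (sq_nonneg (g11 * d1 + g12 * d2 + g13 * d3)),
        sq_nonneg ((g11 * g22 - g12 ^ 2) * d2 + (g11 * g23 - g12 * g13) * d3),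
        mul_nonneg (mul_nonneg hg11.le hdet) (sq_nonneg d3)]

/-- Core Lorentzian inequality for the multiaffine quadratic. -/
private lemma coreIneq (A12 A13 A14 A23 A24 A34 : ℝ) (h12 : 0 ≤ A12) (h13 : 0 ≤ A13)
    (h14 : 0 ≤ A14) (h23 : 0 ≤ A23) (h24 : 0 ≤ A24) (h34 : 0 ≤ A34)
    (hD : (A12 * A34) ^ 2 + (A13 * A24) ^ 2 + (A14 * A23) ^ 2
        - 2 * (A12 * A34) * (A13 * A24) - 2 * (A13 * A24) * (A14 * A23)
        - 2 * (A12 * A34) * (A14 * A23) ≤ 0)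
    (z1 z2 z3 z4 : ℝ) :
    4 * (A12 * z1 * z2 + A13 * z1 * z3 + A14 * z1 * z4 + A23 * z2 * z3 + A24 * z2 * z4
        + A34 * z3 * z4) * (A12 + A13 + A14 + A23 + A24 + A34)
      ≤ (A12 * (z1 + z2) + A13 * (z1 + z3) + A14 * (z1 + z4) + A23 * (z2 + z3)
        + A24 * (z2 + z4) + A34 * (z3 + z4)) ^ 2 := by
  have hm12 : A12 * A34 ≤ (A13 + A14) * (A23 + A24) := by
    nlinarith [hD, sq_nonneg (A13 * A23 - A14 * A24), mul_nonneg h13 h23, mul_nonneg h14 h24]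
  have hm13 : A13 * A24 ≤ (A12 + A14) * (A23 + A34) := by
    nlinarith [hD, sq_nonneg (A12 * A23 - A14 * A34), mul_nonneg h12 h23, mul_nonneg h14 h34]
  have hm23 : A14 * A23 ≤ (A12 + A24) * (A13 + A34) := by
    nlinarith [hD, sq_nonneg (A12 * A13 - A24 * A34), mul_nonneg h12 h13, mul_nonneg h24 h34]
  have hsnn : (0:ℝ) ≤ 2 * (A12 + A13 + A14 + A23 + A24 + A34) := by positivity
  have e12 : (0:ℝ) ≤ 2 * ((A12 + A13 + A14) * (A12 + A23 + A24))
      - 2 * (A12 + A13 + A14 + A23 + A24 + A34) * A12 := by nlinarith [hm12]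
  have e13 : (0:ℝ) ≤ 2 * ((A12 + A13 + A14) * (A13 + A23 + A34))
      - 2 * (A12 + A13 + A14 + A23 + A24 + A34) * A13 := by nlinarith [hm13]
  have e23 : (0:ℝ) ≤ 2 * ((A12 + A23 + A24) * (A13 + A23 + A34))
      - 2 * (A12 + A13 + A14 + A23 + A24 + A34) * A23 := by nlinarith [hm23]
  have f12 := mul_nonneg (mul_nonneg hsnn h12) e12
  have f13 := mul_nonneg (mul_nonneg hsnn h13) e13
  have f23 := mul_nonneg (mul_nonneg hsnn h23) e23
  have fdet := mul_nonneg (sq_nonneg (2 * (A12 + A13 + A14 + A23 + A24 + A34))) (neg_nonneg.2 hD)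
  have key := psd3 ((A12 + A13 + A14) ^ 2)
      ((A12 + A13 + A14) * (A12 + A23 + A24) - 2 * (A12 + A13 + A14 + A23 + A24 + A34) * A12)
      ((A12 + A13 + A14) * (A13 + A23 + A34) - 2 * (A12 + A13 + A14 + A23 + A24 + A34) * A13)
      ((A12 + A23 + A24) ^ 2)
      ((A12 + A23 + A24) * (A13 + A23 + A34) - 2 * (A12 + A13 + A14 + A23 + A24 + A34) * A23)
      ((A13 + A23 + A34) ^ 2) (sq_nonneg _) (sq_nonneg _) (sq_nonneg _)
      (by linarith [f12]) (by linarith [f13]) (by linarith [f23]) (by linarith [fdet])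
      (z1 - z4) (z2 - z4) (z3 - z4)
  linarith [key]

private lemma exists_beta (A B c K : ℝ) (hA : 0 ≤ A) (hB : 0 ≤ B)
    (h : 2 * Real.sqrt (A * B) + c < K) :
    ∃ β : ℝ, 0 < β ∧ A * β ^ 2 + B / β ^ 2 + c < K := by
  have hKc : 0 < K - c := by
    have := Real.sqrt_nonneg (A * B); linarith
  rcases eq_or_lt_of_le hA with hA0 | hA0
  · rcases eq_or_lt_of_le hB with hB0 | hB0
    · exact ⟨1, one_pos, by rw [← hA0, ← hB0]; norm_num; linarith⟩
    · refine ⟨Real.sqrt (2 * B / (K - c)), Real.sqrt_pos.2 (by positivity), ?_⟩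
      have hb : Real.sqrt (2 * B / (K - c)) ^ 2 = 2 * B / (K - c) :=
        Real.sq_sqrt (by positivity)
      rw [hb, ← hA0]
      have e : B / (2 * B / (K - c)) = (K - c) / 2 := by
        field_simp
      rw [e]; linarith
  · rcases eq_or_lt_of_le hB with hB0 | hB0
    · refine ⟨Real.sqrt ((K - c) / (2 * A)), Real.sqrt_pos.2 (by positivity), ?_⟩
      have hb : Real.sqrt ((K - c) / (2 * A)) ^ 2 = (K - c) / (2 * A) :=
        Real.sq_sqrt (by positivity)
      rw [hb, ← hB0]
      have e : A * ((K - c) / (2 * A)) = (K - c) / 2 := by field_simp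
      rw [e]
      simp only [zero_div]
      linarith
    · refine ⟨Real.sqrt (Real.sqrt (B / A)), Real.sqrt_pos.2 (Real.sqrt_pos.2 (by positivity)),
        ?_⟩
      have h1 : Real.sqrt (Real.sqrt (B / A)) ^ 2 = Real.sqrt (B / A) :=
        Real.sq_sqrt (Real.sqrt_nonneg _)
      rw [h1]
      have hsp : 0 < Real.sqrt (B / A) := Real.sqrt_pos.2 (by positivity)
      have e1 : Real.sqrt (A * B) = A * Real.sqrt (B / A) := by
        rw [show A * B = A ^ 2 * (B / A) by field_simp, Real.sqrt_mul (sq_nonneg A),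
          Real.sqrt_sq hA0.le]
      have e2' : Real.sqrt (A * B) * Real.sqrt (B / A) = B := by
        rw [← Real.sqrt_mul (by positivity), show A * B * (B / A) = B ^ 2 by field_simp,
          Real.sqrt_sq hB0.le]
      have e2 : B / Real.sqrt (B / A) = Real.sqrt (A * B) := by
        rw [div_eq_iff hsp.ne']; linarith [e2']
      rw [← e1, e2]; linarith

private lemma construct (P Q A B C D : ℝ) (hP : 0 ≤ P) (hQ : 0 ≤ Q) (hA : 0 ≤ A) (hB : 0 ≤ B)
    (hC : 0 ≤ C) (hD : 0 ≤ D)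
    (h : Real.sqrt (A * D) + Real.sqrt (B * C) < Real.sqrt (P * Q)) :
    ∃ z1 z2 w1 w2 : ℂ, 0 < z1.im ∧ 0 < z2.im ∧ 0 < w1.im ∧ 0 < w2.im ∧
      (P : ℂ) * (z1 * z2) + (A : ℂ) * (z1 * w1) + (B : ℂ) * (z1 * w2) + (C : ℂ) * (z2 * w1)
        + (D : ℂ) * (z2 * w2) + (Q : ℂ) * (w1 * w2) = 0 := by
  have hPQ : 0 < P * Q := by
    have h0 : 0 < Real.sqrt (P * Q) := lt_of_le_of_lt (by positivity) h
    have h1 := Real.sq_sqrt (mul_nonneg hP hQ)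
    nlinarith [mul_pos h0 h0]
  have hPpos : 0 < P := by nlinarith
  have hQpos : 0 < Q := by nlinarith
  have hsq : 2 * Real.sqrt (A * C * (B * D)) + (A * D + B * C) < P * Q := by
    have e : Real.sqrt (A * C * (B * D)) = Real.sqrt (A * D) * Real.sqrt (B * C) := by
      rw [← Real.sqrt_mul (by positivity)]
      congr 1; ring
    rw [e]
    have sAD := Real.sq_sqrt (mul_nonneg hA hD)
    have sBC := Real.sq_sqrt (mul_nonneg hB hC)
    have sPQ := Real.sq_sqrt hPQ.le
    nlinarith [h, Real.sqrt_nonneg (A * D), Real.sqrt_nonneg (B * C), Real.sqrt_nonneg (P * Q)]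
  obtain ⟨β, hβ, hgB⟩ := exists_beta (A * C) (B * D) (A * D + B * C) (P * Q)
    (by positivity) (by positivity) hsq
  have hP1Q1 : (A * β + B / β) * (C * β + D / β) < P * Q := by
    have e : (A * β + B / β) * (C * β + D / β)
        = A * C * β ^ 2 + B * D / β ^ 2 + (A * D + B * C) := by
      field_simp; ring
    rw [e]; exact hgB
  set P1 : ℝ := A * β + B / β with hP1def
  set Q1 : ℝ := C * β + D / β with hQ1def
  have hP1 : 0 ≤ P1 := by rw [hP1def]; positivity
  have hQ1 : 0 ≤ Q1 := by rw [hQ1def]; positivity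
  have hsq2 : 2 * Real.sqrt (P1 ^ 2 * Q1 ^ 2) + 2 * (P1 * Q1) < 4 * (P * Q) := by
    rw [show P1 ^ 2 * Q1 ^ 2 = (P1 * Q1) ^ 2 by ring, Real.sqrt_sq (mul_nonneg hP1 hQ1)]
    linarith
  obtain ⟨α, hα, hgA⟩ := exists_beta (P1 ^ 2) (Q1 ^ 2) (2 * (P1 * Q1)) (4 * (P * Q))
    (sq_nonneg _) (sq_nonneg _) hsq2
  set R : ℝ := P1 * α + Q1 / α with hRdef
  have hRnn : 0 ≤ R := by rw [hRdef]; positivity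
  have hR2 : R ^ 2 < 4 * (P * Q) := by
    have e : R ^ 2 = P1 ^ 2 * α ^ 2 + Q1 ^ 2 / α ^ 2 + 2 * (P1 * Q1) := by
      rw [hRdef]; field_simp; ring
    rw [e]; exact hgA
  set D0 : ℝ := Real.sqrt (4 * (P * Q) - R ^ 2) with hD0def
  have hD0 : 0 < D0 := Real.sqrt_pos.2 (by linarith)
  have hD0sq : D0 ^ 2 = 4 * (P * Q) - R ^ 2 := Real.sq_sqrt (by linarith)
  set E : ℂ := ((2 * P + R : ℝ) : ℂ) + (D0 : ℝ) * Complex.I with hEdef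
  set zz : ℂ := (((-R : ℝ) : ℂ) + (D0 : ℝ) * Complex.I) * E with hzzdef
  set ww : ℂ := ((2 * P : ℝ) : ℂ) * E with hwwdef
  have hD0C : (D0 : ℂ) ^ 2 = 4 * ((P : ℂ) * Q) - (R : ℂ) ^ 2 := by
    exact_mod_cast congrArg (fun x : ℝ => (x : ℂ)) hD0sq
  have hkey : (P : ℂ) * zz ^ 2 + (R : ℂ) * (zz * ww) + (Q : ℂ) * ww ^ 2 = 0 := by
    rw [hzzdef, hwwdef, hEdef]
    push_cast
    linear_combination ((P : ℂ) * ((2 * (P:ℂ) + R) + (D0:ℂ) * Complex.I) ^ 2 * (D0 : ℂ) ^ 2)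
        * Complex.I_sq - ((P : ℂ) * ((2 * (P:ℂ) + R) + (D0:ℂ) * Complex.I) ^ 2) * hD0C
  have hEim : E.im = D0 := by simp [hEdef]
  have hEre : E.re = 2 * P + R := by simp [hEdef]
  have hwwim : ww.im = 2 * P * D0 := by
    rw [hwwdef, Complex.mul_im]
    simp [hEim]
  have hzzim : zz.im = 2 * P * D0 := by
    rw [hzzdef, Complex.mul_im]
    simp [hEim, hEre]
    ring
  have him : (0:ℝ) < 2 * P * D0 := by positivity
  set γ : ℝ := α⁻¹ with hγdef
  set δ : ℝ := β⁻¹ with hδdef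
  have hγ : 0 < γ := by rw [hγdef]; positivity
  have hδ : 0 < δ := by rw [hδdef]; positivity
  have hac : ((α : ℂ)) * ((γ : ℂ)) = 1 := by
    rw [hγdef, ← Complex.ofReal_mul, mul_inv_cancel₀ hα.ne', Complex.ofReal_one]
  have hbd : ((β : ℂ)) * ((δ : ℂ)) = 1 := by
    rw [hδdef, ← Complex.ofReal_mul, mul_inv_cancel₀ hβ.ne', Complex.ofReal_one]
  have hRreal : R = A * (α * β) + B * (α * δ) + C * (γ * β) + D * (γ * δ) := by
    rw [hRdef, hP1def, hQ1def, hγdef, hδdef]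
    field_simp
    ring
  have hRC : (R : ℂ) = (A : ℂ) * (α * β) + (B : ℂ) * (α * δ) + (C : ℂ) * (γ * β)
      + (D : ℂ) * (γ * δ) := by exact_mod_cast congrArg (fun x : ℝ => (x : ℂ)) hRreal
  refine ⟨(α : ℂ) * zz, (γ : ℂ) * zz, (β : ℂ) * ww, (δ : ℂ) * ww, ?_, ?_, ?_, ?_, ?_⟩
  · rw [Complex.mul_im]; simp [hzzim]; positivity
  · rw [Complex.mul_im]; simp [hzzim]; positivity
  · rw [Complex.mul_im]; simp [hwwim]; positivity
  · rw [Complex.mul_im]; simp [hwwim]; positivity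
  · linear_combination hkey + ((P : ℂ) * zz ^ 2) * hac + ((Q : ℂ) * ww ^ 2) * hbd
      - (zz * ww) * hRC

/-- A multivariate polynomial over `ℂ` is *stable* if it is identically zero or has no zeros
in the product of upper half planes. -/
def IsStable {σ : Type*} (f : MvPolynomial σ ℂ) : Prop :=
  f = 0 ∨ ∀ u : σ → ℂ, (∀ i, 0 < (u i).im) → MvPolynomial.eval u f ≠ 0

/-- A homogeneous quadratic multiaffine polynomial in four variables with nonnegative real
coefficients is stable iff the discriminant-type inequality holds.  Here `x₁ = X 0`, …,
`x₄ = X 3`. -/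
theorem stable_iff_discriminant (a12 a13 a14 a23 a24 a34 : ℝ)
    (h12 : 0 ≤ a12) (h13 : 0 ≤ a13) (h14 : 0 ≤ a14)
    (h23 : 0 ≤ a23) (h24 : 0 ≤ a24) (h34 : 0 ≤ a34) :
    IsStable ((C (a12 : ℂ) * X 0 * X 1 + C (a13 : ℂ) * X 0 * X 2 + C (a14 : ℂ) * X 0 * X 3 +
        C (a23 : ℂ) * X 1 * X 2 + C (a24 : ℂ) * X 1 * X 3 + C (a34 : ℂ) * X 2 * X 3 :
        MvPolynomial (Fin 4) ℂ)) ↔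
      a12 ^ 2 * a34 ^ 2 + a13 ^ 2 * a24 ^ 2 + a14 ^ 2 * a23 ^ 2
          - 2 * a12 * a34 * a13 * a24 - 2 * a13 * a24 * a14 * a23
          - 2 * a12 * a34 * a14 * a23 ≤ 0 := by
  constructor
  · -- stable → discriminant ≤ 0
    intro hst
    by_contra hcon
    push_neg at hcon
    rcases hst with hf0 | hroot
    · -- the polynomial is zero: all coefficients vanish
      have he := congrArg (MvPolynomial.eval (fun _ : Fin 4 => Complex.I)) hf0
      simp only [map_add, map_mul, eval_C, eval_X, map_zero] at he
      have hsum : ((a12 + a13 + a14 + a23 + a24 + a34 : ℝ) : ℂ) = 0 := by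
        push_cast
        linear_combination -he + ((a12:ℂ) + a13 + a14 + a23 + a24 + a34) * Complex.I_sq
      have hsum' : a12 + a13 + a14 + a23 + a24 + a34 = 0 := by exact_mod_cast hsum
      have z12 : a12 = 0 := by linarith
      have z13 : a13 = 0 := by linarith
      have z14 : a14 = 0 := by linarith
      have z23 : a23 = 0 := by linarith
      have z24 : a24 = 0 := by linarith
      have z34 : a34 = 0 := by linarith
      rw [z12, z13, z14, z23, z24, z34] at hcon
      norm_num at hcon
    · -- construct a root in the upper half planes
      set α : ℝ := Real.sqrt (a12 * a34) with hαdef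
      set β : ℝ := Real.sqrt (a13 * a24) with hβdef
      set γ : ℝ := Real.sqrt (a14 * a23) with hγdef
      have hα2 : α ^ 2 = a12 * a34 := Real.sq_sqrt (by positivity)
      have hβ2 : β ^ 2 = a13 * a24 := Real.sq_sqrt (by positivity)
      have hγ2 : γ ^ 2 = a14 * a23 := Real.sq_sqrt (by positivity)
      have hαnn : 0 ≤ α := Real.sqrt_nonneg _
      have hβnn : 0 ≤ β := Real.sqrt_nonneg _
      have hγnn : 0 ≤ γ := Real.sqrt_nonneg _
      have hfac : a12 ^ 2 * a34 ^ 2 + a13 ^ 2 * a24 ^ 2 + a14 ^ 2 * a23 ^ 2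
          - 2 * a12 * a34 * a13 * a24 - 2 * a13 * a24 * a14 * a23
          - 2 * a12 * a34 * a14 * a23
          = -((α + β + γ) * ((β + γ - α) * ((α + γ - β) * (α + β - γ)))) := by
        linear_combination (-(a12 * a34 + α ^ 2 - 2 * (a13 * a24) - 2 * (a14 * a23))) * hα2
          + (-(a13 * a24 + β ^ 2 - 2 * α ^ 2 - 2 * (a14 * a23))) * hβ2
          + (-(a14 * a23 + γ ^ 2 - 2 * α ^ 2 - 2 * β ^ 2)) * hγ2
      have hprod : (α + β + γ) * ((β + γ - α) * ((α + γ - β) * (α + β - γ))) < 0 := by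
        rw [hfac] at hcon; linarith
      have hsumpos : 0 < α + β + γ := by
        rcases eq_or_lt_of_le (show (0:ℝ) ≤ α + β + γ by positivity) with h0 | h0
        · exfalso
          have hz : α = 0 ∧ β = 0 ∧ γ = 0 := ⟨by linarith, by linarith, by linarith⟩
          rw [hz.1, hz.2.1, hz.2.2] at hprod
          norm_num at hprod
        · exact h0
      have hX : (β + γ - α) * ((α + γ - β) * (α + β - γ)) < 0 := by
        by_contra hcX
        push_neg at hcX
        exact absurd hprod (not_lt.2 (mul_nonneg hsumpos.le hcX))
      by_cases hc1 : β + γ - α < 0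
      · -- α > β + γ : pair (12)(34) dominates
        obtain ⟨z1, z2, w1, w2, hi1, hi2, hi3, hi4, heq⟩ :=
          construct a12 a34 a13 a14 a23 a24 h12 h34 h13 h14 h23 h24 (by
            rw [← hαdef, ← hβdef, ← hγdef]; linarith)
        refine hroot ![z1, z2, w1, w2] ?_ ?_
        · intro i
          fin_cases i
          · simpa using hi1
          · simpa using hi2
          · simpa using hi3
          · simpa using hi4
        · simp only [map_add, map_mul, eval_C, eval_X, Matrix.cons_val_zero,
            Matrix.cons_val_one, Matrix.head_cons, Matrix.cons_val_two, Matrix.tail_cons,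
            Matrix.cons_val_three]
          linear_combination heq
      · by_cases hc2 : α + γ - β < 0
        · -- β > α + γ : pair (13)(24) dominates
          obtain ⟨z1, z2, w1, w2, hi1, hi2, hi3, hi4, heq⟩ :=
            construct a13 a24 a12 a14 a23 a34 h13 h24 h12 h14 h23 h34 (by
              rw [← hαdef, ← hβdef, ← hγdef]; linarith)
          refine hroot ![z1, w1, z2, w2] ?_ ?_
          · intro i
            fin_cases i
            · simpa using hi1
            · simpa using hi3
            · simpa using hi2
            · simpa using hi4
          · simp only [map_add, map_mul, eval_C, eval_X, Matrix.cons_val_zero,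
              Matrix.cons_val_one, Matrix.head_cons, Matrix.cons_val_two, Matrix.tail_cons,
              Matrix.cons_val_three]
            linear_combination heq
        · -- γ > α + β : pair (14)(23) dominates
          push_neg at hc1 hc2
          have hc3 : α + β - γ < 0 := by
            by_contra hcc
            push_neg at hcc
            exact absurd hX (not_lt.2 (mul_nonneg hc1 (mul_nonneg hc2 hcc)))
          obtain ⟨z1, z2, w1, w2, hi1, hi2, hi3, hi4, heq⟩ :=
            construct a14 a23 a12 a13 a24 a34 h14 h23 h12 h13 h24 h34 (by
              rw [← hαdef, ← hβdef, ← hγdef]; linarith)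
          refine hroot ![z1, w1, w2, z2] ?_ ?_
          · intro i
            fin_cases i
            · simpa using hi1
            · simpa using hi3
            · simpa using hi4
            · simpa using hi2
          · simp only [map_add, map_mul, eval_C, eval_X, Matrix.cons_val_zero,
              Matrix.cons_val_one, Matrix.head_cons, Matrix.cons_val_two, Matrix.tail_cons,
              Matrix.cons_val_three]
            linear_combination heq
  · -- discriminant ≤ 0 → stable
    intro hD
    rcases eq_or_lt_of_le (show (0:ℝ) ≤ a12 + a13 + a14 + a23 + a24 + a34 by positivity)
      with hs0 | hs
    · left
      have z12 : a12 = 0 := by linarith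
      have z13 : a13 = 0 := by linarith
      have z14 : a14 = 0 := by linarith
      have z23 : a23 = 0 := by linarith
      have z24 : a24 = 0 := by linarith
      have z34 : a34 = 0 := by linarith
      rw [z12, z13, z14, z23, z24, z34]
      push_cast
      simp
    · right
      intro u hu heval
      simp only [map_add, map_mul, eval_C, eval_X] at heval
      have hy0 : 0 < (u 0).im := hu 0
      have hy1 : 0 < (u 1).im := hu 1
      have hy2 : 0 < (u 2).im := hu 2
      have hy3 : 0 < (u 3).im := hu 3
      have hu0 : u 0 = ((u 0).re : ℂ) + ((u 0).im : ℂ) * Complex.I :=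
        (Complex.re_add_im (u 0)).symm
      have hu1 : u 1 = ((u 1).re : ℂ) + ((u 1).im : ℂ) * Complex.I :=
        (Complex.re_add_im (u 1)).symm
      have hu2 : u 2 = ((u 2).re : ℂ) + ((u 2).im : ℂ) * Complex.I :=
        (Complex.re_add_im (u 2)).symm
      have hu3 : u 3 = ((u 3).re : ℂ) + ((u 3).im : ℂ) * Complex.I :=
        (Complex.re_add_im (u 3)).symm
      rw [hu0, hu1, hu2, hu3] at heval
      generalize hgx0 : (u 0).re = x0 at heval
      generalize hgx1 : (u 1).re = x1 at heval
      generalize hgx2 : (u 2).re = x2 at heval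
      generalize hgx3 : (u 3).re = x3 at heval
      generalize hgy0 : (u 0).im = y0 at heval hy0
      generalize hgy1 : (u 1).im = y1 at heval hy1
      generalize hgy2 : (u 2).im = y2 at heval hy2
      generalize hgy3 : (u 3).im = y3 at heval hy3
      have hsplit : ((a12 * (x0 * x1 - y0 * y1) + a13 * (x0 * x2 - y0 * y2)
          + a14 * (x0 * x3 - y0 * y3) + a23 * (x1 * x2 - y1 * y2)
          + a24 * (x1 * x3 - y1 * y3) + a34 * (x2 * x3 - y2 * y3) : ℝ) : ℂ)
          + ((a12 * (x0 * y1 + x1 * y0) + a13 * (x0 * y2 + x2 * y0)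
          + a14 * (x0 * y3 + x3 * y0) + a23 * (x1 * y2 + x2 * y1)
          + a24 * (x1 * y3 + x3 * y1) + a34 * (x2 * y3 + x3 * y2) : ℝ) : ℂ) * Complex.I
          = 0 := by
        push_cast
        linear_combination heval - ((a12 : ℂ) * y0 * y1 + (a13 : ℂ) * y0 * y2
          + (a14 : ℂ) * y0 * y3 + (a23 : ℂ) * y1 * y2 + (a24 : ℂ) * y1 * y3
          + (a34 : ℂ) * y2 * y3) * Complex.I_sq
      have hRE : a12 * (x0 * x1 - y0 * y1) + a13 * (x0 * x2 - y0 * y2)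
          + a14 * (x0 * x3 - y0 * y3) + a23 * (x1 * x2 - y1 * y2)
          + a24 * (x1 * x3 - y1 * y3) + a34 * (x2 * x3 - y2 * y3) = 0 := by
        simpa using congrArg Complex.re hsplit
      have hIM : a12 * (x0 * y1 + x1 * y0) + a13 * (x0 * y2 + x2 * y0)
          + a14 * (x0 * y3 + x3 * y0) + a23 * (x1 * y2 + x2 * y1)
          + a24 * (x1 * y3 + x3 * y1) + a34 * (x2 * y3 + x3 * y2) = 0 := by
        simpa using congrArg Complex.im hsplit
      -- apply the core inequality with rescaled coefficients
      have hD' : (a12 * (y0 * y1) * (a34 * (y2 * y3))) ^ 2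
          + (a13 * (y0 * y2) * (a24 * (y1 * y3))) ^ 2
          + (a14 * (y0 * y3) * (a23 * (y1 * y2))) ^ 2
          - 2 * (a12 * (y0 * y1) * (a34 * (y2 * y3))) * (a13 * (y0 * y2) * (a24 * (y1 * y3)))
          - 2 * (a13 * (y0 * y2) * (a24 * (y1 * y3))) * (a14 * (y0 * y3) * (a23 * (y1 * y2)))
          - 2 * (a12 * (y0 * y1) * (a34 * (y2 * y3))) * (a14 * (y0 * y3) * (a23 * (y1 * y2)))
          ≤ 0 := by
        have e : (a12 * (y0 * y1) * (a34 * (y2 * y3))) ^ 2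
            + (a13 * (y0 * y2) * (a24 * (y1 * y3))) ^ 2
            + (a14 * (y0 * y3) * (a23 * (y1 * y2))) ^ 2
            - 2 * (a12 * (y0 * y1) * (a34 * (y2 * y3))) * (a13 * (y0 * y2) * (a24 * (y1 * y3)))
            - 2 * (a13 * (y0 * y2) * (a24 * (y1 * y3))) * (a14 * (y0 * y3) * (a23 * (y1 * y2)))
            - 2 * (a12 * (y0 * y1) * (a34 * (y2 * y3))) * (a14 * (y0 * y3) * (a23 * (y1 * y2)))
            = (a12 ^ 2 * a34 ^ 2 + a13 ^ 2 * a24 ^ 2 + a14 ^ 2 * a23 ^ 2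
              - 2 * a12 * a34 * a13 * a24 - 2 * a13 * a24 * a14 * a23
              - 2 * a12 * a34 * a14 * a23) * (y0 * y1 * y2 * y3) ^ 2 := by ring
        rw [e]
        have := mul_nonneg (neg_nonneg.2 hD) (sq_nonneg (y0 * y1 * y2 * y3))
        linarith
      have key := coreIneq (a12 * (y0 * y1)) (a13 * (y0 * y2)) (a14 * (y0 * y3))
        (a23 * (y1 * y2)) (a24 * (y1 * y3)) (a34 * (y2 * y3))
        (by positivity) (by positivity) (by positivity) (by positivity) (by positivity)
        (by positivity) hD' (x0 / y0) (x1 / y1) (x2 / y2) (x3 / y3)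
      have hFX : a12 * (y0 * y1) * (x0 / y0) * (x1 / y1)
          + a13 * (y0 * y2) * (x0 / y0) * (x2 / y2) + a14 * (y0 * y3) * (x0 / y0) * (x3 / y3)
          + a23 * (y1 * y2) * (x1 / y1) * (x2 / y2) + a24 * (y1 * y3) * (x1 / y1) * (x3 / y3)
          + a34 * (y2 * y3) * (x2 / y2) * (x3 / y3)
          = a12 * (x0 * x1) + a13 * (x0 * x2) + a14 * (x0 * x3) + a23 * (x1 * x2)
            + a24 * (x1 * x3) + a34 * (x2 * x3) := by
        field_simp
      have hBB : a12 * (y0 * y1) * (x0 / y0 + x1 / y1) + a13 * (y0 * y2) * (x0 / y0 + x2 / y2)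
          + a14 * (y0 * y3) * (x0 / y0 + x3 / y3) + a23 * (y1 * y2) * (x1 / y1 + x2 / y2)
          + a24 * (y1 * y3) * (x1 / y1 + x3 / y3) + a34 * (y2 * y3) * (x2 / y2 + x3 / y3)
          = a12 * (x0 * y1 + x1 * y0) + a13 * (x0 * y2 + x2 * y0)
          + a14 * (x0 * y3 + x3 * y0) + a23 * (x1 * y2 + x2 * y1)
          + a24 * (x1 * y3 + x3 * y1) + a34 * (x2 * y3 + x3 * y2) := by
        field_simp
      rw [hFX, hBB, hIM] at key
      -- now: 4 * FX * FY ≤ 0 and FX = FY, so FY ^ 2 ≤ 0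
      have hFY : a12 * (x0 * x1) + a13 * (x0 * x2) + a14 * (x0 * x3) + a23 * (x1 * x2)
          + a24 * (x1 * x3) + a34 * (x2 * x3)
          = a12 * (y0 * y1) + a13 * (y0 * y2) + a14 * (y0 * y3) + a23 * (y1 * y2)
            + a24 * (y1 * y3) + a34 * (y2 * y3) := by linarith
      rw [hFY] at key
      -- each term of FY is nonneg, so FY = 0 forces every coefficient to vanish
      have t12 : (0:ℝ) ≤ a12 * (y0 * y1) := by positivity
      have t13 : (0:ℝ) ≤ a13 * (y0 * y2) := by positivity
      have t14 : (0:ℝ) ≤ a14 * (y0 * y3) := by positivity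
      have t23 : (0:ℝ) ≤ a23 * (y1 * y2) := by positivity
      have t24 : (0:ℝ) ≤ a24 * (y1 * y3) := by positivity
      have t34 : (0:ℝ) ≤ a34 * (y2 * y3) := by positivity
      have hFYsq : (a12 * (y0 * y1) + a13 * (y0 * y2) + a14 * (y0 * y3) + a23 * (y1 * y2)
          + a24 * (y1 * y3) + a34 * (y2 * y3)) * (a12 * (y0 * y1) + a13 * (y0 * y2)
          + a14 * (y0 * y3) + a23 * (y1 * y2) + a24 * (y1 * y3) + a34 * (y2 * y3)) = 0 :=
        le_antisymm (by linarith [key]) (mul_self_nonneg _)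
      have hFY0 : a12 * (y0 * y1) + a13 * (y0 * y2) + a14 * (y0 * y3) + a23 * (y1 * y2)
          + a24 * (y1 * y3) + a34 * (y2 * y3) = 0 := mul_self_eq_zero.mp hFYsq
      have g12 : a12 = 0 := by
        rcases mul_eq_zero.mp (le_antisymm (by linarith) t12) with h | h
        · exact h
        · exact absurd h (mul_pos hy0 hy1).ne'
      have g13 : a13 = 0 := by
        rcases mul_eq_zero.mp (le_antisymm (by linarith) t13) with h | h
        · exact h
        · exact absurd h (mul_pos hy0 hy2).ne'
      have g14 : a14 = 0 := by
        rcases mul_eq_zero.mp (le_antisymm (by linarith) t14) with h | h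
        · exact h
        · exact absurd h (mul_pos hy0 hy3).ne'
      have g23 : a23 = 0 := by
        rcases mul_eq_zero.mp (le_antisymm (by linarith) t23) with h | h
        · exact h
        · exact absurd h (mul_pos hy1 hy2).ne'
      have g24 : a24 = 0 := by
        rcases mul_eq_zero.mp (le_antisymm (by linarith) t24) with h | h
        · exact h
        · exact absurd h (mul_pos hy1 hy3).ne'
      have g34 : a34 = 0 := by
        rcases mul_eq_zero.mp (le_antisymm (by linarith) t34) with h | h
        · exact h
        · exact absurd h (mul_pos hy2 hy3).ne'
      linarith

end
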